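/- If g·f_j belongs to F[V](q−1) for all g ∈ G and all 1 ≤ j ≤ k, then f_1, ..., f_k are G-invariant polynomials; hence they form a separating set for F_q[V]^G. -/
import Mathlib


open MvPolynomial

/-- The substitution action of a matrix `M` on polynomials, so that
`(polyAct M f)(v) = f (M.mulVec v)`.  Taking `M = g⁻¹` gives the action
`(g · f)(v) = f (g⁻¹ · v)` of a matrix group on the coordinate ring. -/
noncomputable def polyAct {F : Type*} [CommSemiring F] {n : ℕ}
    (M : Matrix (Fin n) (Fin n) F) (f : MvPolynomial (Fin n) F) : MvPolynomial (Fin n) F :=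
  aeval (fun i => ∑ j, C (M i j) * X j) f

/-- `f_w = (-1)^n ∏_i ∏_{a ∈ F \ {w_i}} (x_i - a)`, the indicator polynomial of `w`. -/
noncomputable def fW {F : Type*} [Field F] [Fintype F] [DecidableEq F] {n : ℕ}
    (w : Fin n → F) : MvPolynomial (Fin n) F :=
  (-1) ^ n * ∏ i, ∏ a ∈ (Finset.univ \ {w i}), (X i - C a)

/-- `f_j = ∑_{w ∈ W_j} f_w`, the indicator polynomial of the subset `W ⊆ V`. -/
noncomputable def fOrb {F : Type*} [Field F] [Fintype F] [DecidableEq F] {n : ℕ}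
    (W : Set (Fin n → F)) : MvPolynomial (Fin n) F :=
  ∑ w ∈ (Set.toFinite W).toFinset, fW w

/-- `n_j = ∏_{g ∈ G} (g · f)`, where `(g · f)(v) = f(g⁻¹ · v)`. -/
noncomputable def nInvPoly {F : Type*} [Field F] [Fintype F] {n : ℕ}
    (G : Subgroup (Matrix.GeneralLinearGroup (Fin n) F)) (f : MvPolynomial (Fin n) F) :
    MvPolynomial (Fin n) F :=
  letI : Fintype G := Fintype.ofFinite G
  ∏ g : G, polyAct (((g : Matrix.GeneralLinearGroup (Fin n) F)⁻¹ :
      Matrix.GeneralLinearGroup (Fin n) F) : Matrix (Fin n) (Fin n) F) f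

/-- The Reynolds average `h = (1/|G|) ∑_{g ∈ G} (g · f)`. -/
noncomputable def reynolds {F : Type*} [Field F] [Fintype F] {n : ℕ}
    (G : Subgroup (Matrix.GeneralLinearGroup (Fin n) F)) (f : MvPolynomial (Fin n) F) :
    MvPolynomial (Fin n) F :=
  letI : Fintype G := Fintype.ofFinite G
  C ((Nat.card G : F)⁻¹) * ∑ g : G, polyAct (((g : Matrix.GeneralLinearGroup (Fin n) F)⁻¹ :
      Matrix.GeneralLinearGroup (Fin n) F) : Matrix (Fin n) (Fin n) F) f

/-- A monomial matrix: exactly one nonzero entry in each row and in each column. -/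
def IsMonomialMatrix {F : Type*} [Zero F] {n : ℕ} (M : Matrix (Fin n) (Fin n) F) : Prop :=
  (∀ i, ∃! j, M i j ≠ 0) ∧ (∀ j, ∃! i, M i j ≠ 0)


universe u

lemma prod_sub_neg_one {F : Type*} [Field F] [Fintype F] [DecidableEq F] (c : F) :
    ∏ a ∈ Finset.univ \ {c}, (c - a) = -1 := by
  have h1 : ∏ a ∈ Finset.univ \ {c}, (c - a) = ∏ x : Fˣ, (x : F) := by
    refine Finset.prod_bij' (i := fun a ha => Units.mk0 (c - a)
      (sub_ne_zero.2 (fun h => by simp [h] at ha)))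
      (j := fun x _ => c - (x : F)) ?_ ?_ ?_ ?_ ?_
    · intro a ha; exact Finset.mem_univ _
    · intro x _
      simp [Finset.mem_sdiff, sub_eq_self, x.ne_zero]
    · intro a ha; simp
    · intro x hx; ext; simp
    · intro a ha; rfl
  have h2 : ∏ x : Fˣ, (x : F) = (((∏ x : Fˣ, x : Fˣ)) : F) := by
    rw [← Units.coeHom_apply, map_prod]; rfl
  rw [h1, h2, FiniteField.prod_univ_units_id_eq_neg_one]
  simp

lemma eval_fW_self {F : Type*} [Field F] [Fintype F] [DecidableEq F] {n : ℕ}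
    (w : Fin n → F) : eval w (fW w) = 1 := by
  simp only [fW, map_mul, map_pow, map_neg, map_one, map_prod, map_sub, eval_X, eval_C]
  have : ∀ i : Fin n, ∏ a ∈ Finset.univ \ {w i}, (w i - a) = -1 :=
    fun i => prod_sub_neg_one (w i)
  simp [this, ← mul_pow]

lemma eval_fW_ne {F : Type*} [Field F] [Fintype F] [DecidableEq F] {n : ℕ}
    {v w : Fin n → F} (h : v ≠ w) : eval v (fW w) = 0 := by
  obtain ⟨i, hi⟩ := Function.ne_iff.1 h
  simp only [fW, map_mul, map_pow, map_neg, map_one, map_prod, map_sub, eval_X, eval_C]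
  rw [Finset.prod_eq_zero (Finset.mem_univ i)]
  · ring
  · exact Finset.prod_eq_zero (by simp [hi]) (sub_self _)

lemma eval_fOrb_mem {F : Type*} [Field F] [Fintype F] [DecidableEq F] {n : ℕ}
    {W : Set (Fin n → F)} {v : Fin n → F} (hv : v ∈ W) : eval v (fOrb W) = 1 := by
  classical
  simp only [fOrb, map_sum]
  rw [Finset.sum_eq_single v]
  · exact eval_fW_self v
  · intro w _ hw; exact eval_fW_ne (Ne.symm hw)
  · intro h; exact absurd ((Set.Finite.mem_toFinset _).2 hv) h

lemma eval_fOrb_notMem {F : Type*} [Field F] [Fintype F] [DecidableEq F] {n : ℕ}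
    {W : Set (Fin n → F)} {v : Fin n → F} (hv : v ∉ W) : eval v (fOrb W) = 0 := by
  classical
  simp only [fOrb, map_sum]
  refine Finset.sum_eq_zero fun w hw => eval_fW_ne fun h => ?_
  exact hv (h ▸ (Set.Finite.mem_toFinset _).1 hw)

lemma eval_polyAct {F : Type*} [CommSemiring F] {n : ℕ}
    (M : Matrix (Fin n) (Fin n) F) (f : MvPolynomial (Fin n) F) (v : Fin n → F) :
    eval v (polyAct M f) = eval (M.mulVec v) f := by
  rw [polyAct, aeval_def, algebraMap_eq, ← eval_assoc]
  have : (⇑(eval v) ∘ fun i => ∑ j, C (M i j) * X j) = M.mulVec v := by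
    funext i; simp [Matrix.mulVec, dotProduct]
  rw [this]

lemma degreeOf_fW_le {F : Type*} [Field F] [Fintype F] [DecidableEq F] {n : ℕ}
    (w : Fin n → F) (i : Fin n) : degreeOf i (fW w) ≤ Fintype.card F - 1 := by
  rw [fW]
  refine le_trans (degreeOf_mul_le _ _ _) ?_
  have hc : degreeOf i ((-1 : MvPolynomial (Fin n) F) ^ n) = 0 := by
    rw [show ((-1 : MvPolynomial (Fin n) F) ^ n) = C ((-1 : F) ^ n) by simp]
    exact degreeOf_C _ _
  rw [hc, zero_add]
  refine le_trans (degreeOf_prod_le _ _ _) ?_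
  have key : ∀ i' : Fin n, degreeOf i (∏ a ∈ Finset.univ \ {w i'}, (X i' - C a))
      ≤ if i' = i then Fintype.card F - 1 else 0 := by
    intro i'
    refine le_trans (degreeOf_prod_le _ _ _) ?_
    have h1 : ∀ a : F, degreeOf i (X i' - C a) ≤ if i' = i then 1 else 0 := by
      intro a
      refine le_trans (degreeOf_sub_le _ _ _) ?_
      simp only [degreeOf_X, degreeOf_C, max_le_iff]
      constructor
      · split <;> simp_all [eq_comm]
      · positivity
    refine le_trans (Finset.sum_le_sum fun a _ => h1 a) ?_
    rw [Finset.sum_const, Finset.card_sdiff_of_subset (by simp), Finset.card_univ, Finset.card_singleton]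
    split <;> simp
  refine le_trans (Finset.sum_le_sum fun i' _ => key i') ?_
  rw [Finset.sum_ite_eq' Finset.univ i (fun _ => Fintype.card F - 1)]
  simp

lemma degreeOf_fOrb_le {F : Type*} [Field F] [Fintype F] [DecidableEq F] {n : ℕ}
    (W : Set (Fin n → F)) (i : Fin n) : degreeOf i (fOrb W) ≤ Fintype.card F - 1 := by
  rw [fOrb]
  refine le_trans (degreeOf_sum_le _ _ _) ?_
  exact Finset.sup_le fun w _ => degreeOf_fW_le w i

lemma poly_zero_of_eval_zero {F : Type u} [Field F] [Fintype F] [DecidableEq F] {n : ℕ}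
    (p : MvPolynomial (Fin n) F)
    (hp : ∀ i, degreeOf i p ≤ Fintype.card F - 1)
    (h : ∀ v, eval v p = 0) : p = 0 := by
  classical
  set e : ULift.{u} (Fin n) ≃ Fin n := Equiv.ulift
  set p' : MvPolynomial (ULift.{u} (Fin n)) F := rename e.symm p with hp'
  have hz : p' = 0 := by
    refine MvPolynomial.eq_zero_of_eval_eq_zero (K := F) (σ := ULift.{u} (Fin n)) p'
      (fun v => ?_) ?_
    · rw [hp', eval_rename]; exact h _
    · rw [mem_restrictDegree_iff_sup]
      intro j
      have h2 : degreeOf j p' = degreeOf (e j) p := by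
        simpa using degreeOf_rename_of_injective (p := p) (f := ⇑e.symm) e.symm.injective (e j)
      rw [← degreeOf_def, h2]
      exact hp _
  have := rename_injective (R := F) (⇑e.symm) e.symm.injective
  apply this
  simpa using hz

lemma poly_eq_of_eval_eq {F : Type u} [Field F] [Fintype F] [DecidableEq F] {n : ℕ}
    (p q : MvPolynomial (Fin n) F)
    (hp : ∀ i, degreeOf i p ≤ Fintype.card F - 1)
    (hq : ∀ i, degreeOf i q ≤ Fintype.card F - 1)
    (h : ∀ v, eval v p = eval v q) : p = q := by
  have : p - q = 0 := by
    refine poly_zero_of_eval_zero (p - q) (fun i =>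
      le_trans (degreeOf_sub_le i p q) (max_le (hp i) (hq i))) (fun v => by simp [h v])
  exact sub_eq_zero.mp this

/-- if `g·f_j ∈ F[V](q-1)` (i.e. every variable-degree of `g·f_j` is at most
`q-1`) for all `g ∈ G` and all `j`, then the `f_j` are invariants, hence form a
separating set for `F_q[V]^G`. -/
theorem stmt3 {q n k : ℕ} (F : Type*) [Field F] [Fintype F] [DecidableEq F]
    (hq : Fintype.card F = q)
    (G : Subgroup (Matrix.GeneralLinearGroup (Fin n) F))
    (W : Fin k → Set (Fin n → F))
    (horb : ∀ j, ∃ w : Fin n → F, W j =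
      {u | ∃ g ∈ G, (g : Matrix (Fin n) (Fin n) F).mulVec w = u})
    (hcover : ∀ v : Fin n → F, ∃ j, v ∈ W j)
    (hdisj : ∀ j₁ j₂, j₁ ≠ j₂ → Disjoint (W j₁) (W j₂))
    (hdeg : ∀ g ∈ G, ∀ j, ∀ i : Fin n,
      degreeOf i
        (polyAct ((g⁻¹ : Matrix.GeneralLinearGroup (Fin n) F) : Matrix (Fin n) (Fin n) F)
          (fOrb (W j))) ≤ q - 1) :
    -- the f_j are invariants
    (∀ j, ∀ g ∈ G,
      polyAct ((g⁻¹ : Matrix.GeneralLinearGroup (Fin n) F) : Matrix (Fin n) (Fin n) F)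
        (fOrb (W j)) = fOrb (W j)) ∧
    -- hence they form a separating set
    (∀ u v : Fin n → F,
      (¬ ∃ g ∈ G, (g : Matrix (Fin n) (Fin n) F).mulVec u = v) →
      ∃ j, eval u (fOrb (W j)) ≠ eval v (fOrb (W j))) := by
  classical
  have comp : ∀ (a b : Matrix.GeneralLinearGroup (Fin n) F) (w : Fin n → F),
      ((a * b : Matrix.GeneralLinearGroup (Fin n) F) : Matrix (Fin n) (Fin n) F).mulVec w =
        (a : Matrix (Fin n) (Fin n) F).mulVec ((b : Matrix (Fin n) (Fin n) F).mulVec w) := by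
    intro a b w; rw [Units.val_mul, ← Matrix.mulVec_mulVec]
  have cancel : ∀ (a : Matrix.GeneralLinearGroup (Fin n) F) (v : Fin n → F),
      (a : Matrix (Fin n) (Fin n) F).mulVec
        (((a⁻¹ : Matrix.GeneralLinearGroup (Fin n) F) : Matrix (Fin n) (Fin n) F).mulVec v) = v := by
    intro a v; rw [Matrix.mulVec_mulVec, Units.mul_inv, Matrix.one_mulVec]
  have cancel' : ∀ (a : Matrix.GeneralLinearGroup (Fin n) F) (v : Fin n → F),
      ((a⁻¹ : Matrix.GeneralLinearGroup (Fin n) F) : Matrix (Fin n) (Fin n) F).mulVec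
        ((a : Matrix (Fin n) (Fin n) F).mulVec v) = v := by
    intro a v; rw [Matrix.mulVec_mulVec, Units.inv_mul, Matrix.one_mulVec]
  have key : ∀ j, ∀ g ∈ G, ∀ v : Fin n → F,
      ((g⁻¹ : Matrix.GeneralLinearGroup (Fin n) F) : Matrix (Fin n) (Fin n) F).mulVec v ∈ W j
        ↔ v ∈ W j := by
    intro j g hg v
    obtain ⟨w, hw⟩ := horb j
    rw [hw]
    simp only [Set.mem_setOf_eq]
    constructor
    · rintro ⟨h, hh, hhv⟩
      exact ⟨g * h, mul_mem hg hh, by rw [comp, hhv, cancel]⟩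
    · rintro ⟨h, hh, hhv⟩
      exact ⟨g⁻¹ * h, mul_mem (inv_mem hg) hh, by rw [comp, hhv]⟩
  constructor
  · intro j g hg
    refine poly_eq_of_eval_eq _ _ ?_ (degreeOf_fOrb_le _) ?_
    · intro i; rw [hq]; exact hdeg g hg j i
    · intro v
      rw [eval_polyAct]
      by_cases hv : v ∈ W j
      · rw [eval_fOrb_mem hv, eval_fOrb_mem ((key j g hg v).2 hv)]
      · rw [eval_fOrb_notMem hv,
          eval_fOrb_notMem (fun hmem => hv ((key j g hg v).1 hmem))]
  · intro u v hne
    obtain ⟨j, hj⟩ := hcover u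
    refine ⟨j, ?_⟩
    have hv : v ∉ W j := by
      intro hvj
      obtain ⟨w, hw⟩ := horb j
      rw [hw] at hj hvj
      obtain ⟨g1, hg1, h1⟩ := hj
      obtain ⟨g2, hg2, h2⟩ := hvj
      refine hne ⟨g2 * g1⁻¹, mul_mem hg2 (inv_mem hg1), ?_⟩
      have hw' : ((g1⁻¹ : Matrix.GeneralLinearGroup (Fin n) F) :
          Matrix (Fin n) (Fin n) F).mulVec u = w := by
        rw [← h1, cancel']
      rw [comp, hw', h2]
    rw [eval_fOrb_mem hj, eval_fOrb_notMem hv]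
    exact one_ne_zero
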